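/- Suppose p ∈ ℝ^T satisfies P̲ ⪯ p ⪯ P̄ and there is some t with (Hp)_t < B̲_t, where B̲ is the lower envelope from the feasibility theorem. Then there exists t′ ≥ t with (Hp)_{t′} < S̲_{t′}, i.e., p violates the cumulative lower bound at some later time. -/
import Mathlib


/-- Cumulative sum: `(Hp)_t = ∑_{τ ≤ t} p_τ`. -/
def cumsum {T : ℕ} (p : Fin T → ℝ) (t : Fin T) : ℝ := ∑ τ ∈ Finset.Iic t, p τ

/-- Lower envelope `B̲_t = C̄_t + max_{τ≥t}(S̲_τ − C̄_τ)` with `C̄ = H P̄`. -/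
def Blo {T : ℕ} (Phi Slo : Fin T → ℝ) (t : Fin T) : ℝ :=
  cumsum Phi t + (Finset.Ici t).sup' Finset.nonempty_Ici (fun τ => Slo τ - cumsum Phi τ)

lemma cumsum_diff {T : ℕ} (p : Fin T → ℝ) {a b : Fin T} (h : a ≤ b) :
    cumsum p b = cumsum p a + ∑ τ ∈ Finset.Ioc a b, p τ := by
  have hu : Finset.Iic a ∪ Finset.Ioc a b = Finset.Iic b := by
    ext x
    simp only [Finset.mem_union, Finset.mem_Iic, Finset.mem_Ioc, Fin.le_def, Fin.lt_def] at *
    omega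
  have hd : Disjoint (Finset.Iic a) (Finset.Ioc a b) := by
    simp only [Finset.disjoint_left, Finset.mem_Iic, Finset.mem_Ioc]
    exact fun x hx h => absurd h.1 (not_lt.2 hx)
  rw [cumsum, cumsum, ← hu, Finset.sum_union hd]

/-- If `P̲ ⪯ p ⪯ P̄` and `(Hp)_t < B̲_t` at some `t`, then there exists
`t′ ≥ t` with `(Hp)_{t′} < S̲_{t′}`. -/
theorem below_lower_envelope_violates (T : ℕ) (Plo Phi Slo : Fin T → ℝ)
    (p : Fin T → ℝ) (hp : ∀ t, Plo t ≤ p t ∧ p t ≤ Phi t)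
    (t : Fin T) (hviol : cumsum p t < Blo Phi Slo t) :
    ∃ t' : Fin T, t ≤ t' ∧ cumsum p t' < Slo t' := by
  obtain ⟨t', ht', hmax⟩ := Finset.exists_mem_eq_sup' (Finset.nonempty_Ici (a := t))
    (fun τ => Slo τ - cumsum Phi τ)
  rw [Finset.mem_Ici] at ht'
  refine ⟨t', ht', ?_⟩
  have h1 : cumsum p t' ≤ cumsum p t + ∑ τ ∈ Finset.Ioc t t', Phi τ := by
    rw [cumsum_diff p ht']
    gcongr with τ hτ
    exact (hp τ).2
  have h2 : cumsum Phi t' = cumsum Phi t + ∑ τ ∈ Finset.Ioc t t', Phi τ := cumsum_diff Phi ht'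
  rw [Blo, hmax] at hviol
  linarith
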